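/- If G' is obtained from an undirected graph G by replacing every edge by a path of length three (subdividing each edge twice), then the Euler tours of G are in bijection with the Euler tours of G'. -/

import Mathlib

open SimpleGraph

/-- The smaller endpoint of an edge (under a fixed linear order on the vertices). -/
def Sym2.emin {V : Type} [LinearOrder V] (e : Sym2 V) : V :=
  Sym2.lift ⟨min, fun _ _ => min_comm _ _⟩ e

/-- The larger endpoint of an edge. -/
def Sym2.emax {V : Type} [LinearOrder V] (e : Sym2 V) : V :=
  Sym2.lift ⟨max, fun _ _ => max_comm _ _⟩ e

/-- Base relation for the graph `G'` obtained from `G` by replacing every edge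
`e = (u,v)` by the path `u - x_e - y_e - v`: the new vertices are pairs `(e, b)`
where `(e, false)` is `x_e` (attached to the smaller endpoint of `e`) and
`(e, true)` is `y_e` (attached to the larger endpoint). -/
def subdivRel {V : Type} [LinearOrder V] (G : SimpleGraph V) :
    (V ⊕ (G.edgeSet × Bool)) → (V ⊕ (G.edgeSet × Bool)) → Prop
  | Sum.inl u, Sum.inr (e, b) => b = false ∧ u = Sym2.emin (e : Sym2 V)
  | Sum.inr (e, b), Sum.inl v => b = true ∧ v = Sym2.emax (e : Sym2 V)
  | Sum.inr (e, b), Sum.inr (e', b') => (e : Sym2 V) = (e' : Sym2 V) ∧ b = false ∧ b' = true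
  | _, _ => False

/-- The graph obtained from `G` by subdividing every edge twice
(replacing each edge by a path of length three). -/
def subdiv2 {V : Type} [LinearOrder V] (G : SimpleGraph V) :
    SimpleGraph (V ⊕ (G.edgeSet × Bool)) :=
  SimpleGraph.fromRel (subdivRel G)

open Classical in
/-- Two closed Eulerian walks represent the same Euler tour when one is a
rotation of the other (same cyclic sequence of edges). -/
noncomputable def EulerTourRel {V : Type} (G : SimpleGraph V)
    (x y : Σ v : V, {p : G.Walk v v // p.IsEulerian}) : Prop :=
  ∃ h : y.1 ∈ x.2.1.support, y.2.1 = x.2.1.rotate y.1 h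

/-- The Euler tours of `G`: closed Eulerian walks up to rotation. -/
noncomputable def EulerTours {V : Type} (G : SimpleGraph V) : Type :=
  Quot (EulerTourRel G)

open Classical in
/-- Two Hamiltonian cycles (as closed walks) are identified when one is a
rotation of the other. -/
noncomputable def HamCycleRel {V : Type} (G : SimpleGraph V)
    (x y : Σ v : V, {p : G.Walk v v // p.IsHamiltonianCycle}) : Prop :=
  ∃ h : y.1 ∈ x.2.1.support, y.2.1 = x.2.1.rotate y.1 h

/-- The Hamiltonian cycles of `G`, up to rotation. -/
noncomputable def HamCycles {V : Type} (G : SimpleGraph V) : Type :=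
  Quot (HamCycleRel G)


set_option linter.unusedSectionVars false
set_option linter.unnecessarySimpa false
namespace ET

variable {W : Type} {H : SimpleGraph W} {u v : W}

section Decomp

variable [DecidableEq W]

lemma takeUntil_start (p : H.Walk u v) (h : u ∈ p.support) :
    p.takeUntil u h = Walk.nil := by
  cases p with
  | nil => rfl
  | cons ha q => simp [Walk.takeUntil]

lemma dropUntil_start (p : H.Walk u v) (h : u ∈ p.support) :
    p.dropUntil u h = p := by
  cases p with
  | nil => rfl
  | cons ha q => simp [Walk.dropUntil]

lemma rotate_start (c : H.Walk u u) (h : u ∈ c.support) :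
    c.rotate u h = c := by
  rw [Walk.rotate, takeUntil_start, dropUntil_start, Walk.append_nil]

lemma takeUntil_cons_of_ne {a b : W} (ha : H.Adj a b) (q : H.Walk b v) (hne : a ≠ u)
    (h : u ∈ (Walk.cons ha q).support) :
    (Walk.cons ha q).takeUntil u h =
      Walk.cons ha (q.takeUntil u (by simpa [hne.symm] using h)) := by
  simp [Walk.takeUntil, hne]

lemma dropUntil_cons_of_ne {a b : W} (ha : H.Adj a b) (q : H.Walk b v) (hne : a ≠ u)
    (h : u ∈ (Walk.cons ha q).support) :
    (Walk.cons ha q).dropUntil u h = q.dropUntil u (by simpa [hne.symm] using h) := by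
  simp [Walk.dropUntil, hne]


lemma takeUntil_congr {a b : W} {p p' : H.Walk a b} (hpp : p = p') (h : u ∈ p.support) :
    p.takeUntil u h = p'.takeUntil u (hpp ▸ h) := by subst hpp; rfl

lemma dropUntil_congr {a b : W} {p p' : H.Walk a b} (hpp : p = p') (h : u ∈ p.support) :
    p.dropUntil u h = p'.dropUntil u (hpp ▸ h) := by subst hpp; rfl

lemma mem_support_concat_of_mem {a b c : W} (p : H.Walk a b) (hbc : H.Adj b c)
    (h : u ∈ p.support) : u ∈ (p.concat hbc).support := by
  rw [Walk.support_concat]; exact List.mem_append_left _ h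

lemma takeUntil_concat_of_mem {a b c : W} (p : H.Walk a b) (hbc : H.Adj b c)
    (h : u ∈ p.support) :
    (p.concat hbc).takeUntil u (mem_support_concat_of_mem p hbc h) = p.takeUntil u h := by
  induction p with
  | nil =>
    simp at h; subst h
    rw [takeUntil_start, takeUntil_start]
  | @cons x y z ha q ih =>
    by_cases hxu : x = u
    · subst hxu; rw [takeUntil_start, takeUntil_start]
    · have h' : u ∈ q.support := by
        rcases (by simpa using h : u = x ∨ u ∈ q.support) with h0 | h0
        · exact absurd h0.symm hxu
        · exact h0
      rw [takeUntil_congr (Walk.concat_cons ha q hbc), takeUntil_cons_of_ne _ _ hxu,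
        takeUntil_cons_of_ne _ _ hxu h]
      congr 1
      exact ih _ h'

lemma dropUntil_concat_of_mem {a b c : W} (p : H.Walk a b) (hbc : H.Adj b c)
    (h : u ∈ p.support) :
    (p.concat hbc).dropUntil u (mem_support_concat_of_mem p hbc h) =
      (p.dropUntil u h).concat hbc := by
  induction p with
  | nil =>
    simp at h; subst h
    rw [dropUntil_start, dropUntil_start]
  | @cons x y z ha q ih =>
    by_cases hxu : x = u
    · subst hxu; rw [dropUntil_start, dropUntil_start]
    · have h' : u ∈ q.support := by
        rcases (by simpa using h : u = x ∨ u ∈ q.support) with h0 | h0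
        · exact absurd h0.symm hxu
        · exact h0
      rw [dropUntil_congr (Walk.concat_cons ha q hbc), dropUntil_cons_of_ne _ _ hxu,
        dropUntil_cons_of_ne _ _ hxu h]
      exact ih _ h'

lemma rotate_cons {a b : W} (ha : H.Adj a b) (t : H.Walk b a)
    (hb : b ∈ (Walk.cons ha t).support) :
    (Walk.cons ha t).rotate b hb = t.concat ha := by
  rw [Walk.rotate, takeUntil_cons_of_ne _ _ ha.ne, dropUntil_cons_of_ne _ _ ha.ne,
    takeUntil_start, dropUntil_start, Walk.concat_eq_append]

/-- rotating a closed walk `cons ha t` at a vertex `u ∈ t.support` is the same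
as rotating the one-step-shifted walk `t.concat ha` at `u`. -/
lemma rotate_cons_eq_rotate_concat {a b : W} (ha : H.Adj a b) (t : H.Walk b a)
    (hne : a ≠ u) (h : u ∈ (Walk.cons ha t).support)
    (ht : u ∈ t.support) :
    (Walk.cons ha t).rotate u h = (t.concat ha).rotate u (mem_support_concat_of_mem t ha ht) := by
  rw [Walk.rotate, Walk.rotate, takeUntil_cons_of_ne _ _ hne, dropUntil_cons_of_ne _ _ hne,
    takeUntil_concat_of_mem _ _ ht, dropUntil_concat_of_mem _ _ ht, Walk.concat_append]

end Decomp

open Classical in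
/-- closed tour sigma type -/
noncomputable abbrev TS (H : SimpleGraph W) := Σ v : W, {p : H.Walk v v // p.IsEulerian}

/-- raw closed walk sigma type -/
abbrev RS (H : SimpleGraph W) := Σ v : W, H.Walk v v

noncomputable def erase (x : TS H) : RS H := ⟨x.1, x.2.1⟩

lemma TS_ext {x y : TS H} (h : erase x = erase y) : x = y := by
  obtain ⟨a, p, hp⟩ := x
  obtain ⟨b, q, hq⟩ := y
  simp only [erase] at h
  obtain ⟨h1, h2⟩ := Sigma.mk.inj_iff.mp h
  subst h1
  have h3 : p = q := eq_of_heq h2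
  subst h3
  rfl

open Classical in
/-- `IsEulerian` with the classical instances used in `EulerTourRel` -/
noncomputable abbrev EuP {W : Type} {H : SimpleGraph W} {a b : W} (p : H.Walk a b) : Prop :=
  p.IsEulerian

open Classical in
lemma euP_isTrail {W : Type} {H : SimpleGraph W} {a b : W} {p : H.Walk a b}
    (h : EuP p) : p.IsTrail := h.isTrail

/-- one-step rotation of a closed walk -/
def shs : RS H → RS H
  | ⟨a, .nil⟩ => ⟨a, .nil⟩
  | ⟨_, .cons h t⟩ => ⟨_, t.concat h⟩

@[simp] lemma shs_nil {a : W} : shs (⟨a, .nil⟩ : RS H) = ⟨a, .nil⟩ := rfl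
@[simp] lemma shs_cons {a b : W} (h : H.Adj a b) (t : H.Walk b a) :
    shs (⟨a, .cons h t⟩ : RS H) = ⟨b, t.concat h⟩ := rfl

lemma count_shs_edges [DecidableEq (Sym2 W)] (x : RS H) (e : Sym2 W) :
    ((shs x).2.edges).count e = (x.2.edges).count e := by
  obtain ⟨a, p⟩ := x
  cases p with
  | nil => rfl
  | cons h t =>
    simp only [shs_cons, Walk.edges_concat, Walk.edges_cons, List.concat_eq_append]
    exact (List.perm_append_singleton _ _).count_eq e

open Classical in
lemma shs_eulerian (x : RS H) (hx : x.2.IsEulerian) : (shs x).2.IsEulerian :=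
  fun e he => (count_shs_edges x e).trans (hx e he)

open Classical in
noncomputable def Sh (x : TS H) : TS H :=
  ⟨(shs (erase x)).1, (shs (erase x)).2, shs_eulerian _ x.2.2⟩

@[simp] lemma erase_Sh (x : TS H) : erase (Sh x) = shs (erase x) := rfl

lemma erase_Sh_iter (x : TS H) (n : ℕ) : erase (Sh^[n] x) = shs^[n] (erase x) := by
  induction n with
  | zero => rfl
  | succ n ih => rw [Function.iterate_succ_apply', Function.iterate_succ_apply', erase_Sh, ih]



lemma rel_Sh (x : TS H) : EulerTourRel H x (Sh x) ∨ Sh x = x := by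
  obtain ⟨a, p, hp⟩ := x
  cases p with
  | nil => right; apply TS_ext; rfl
  | @cons _ b _ hab t =>
    left
    refine ⟨?_, ?_⟩
    · show b ∈ (Walk.cons hab t).support
      simp [Walk.support_cons]
    · letI : DecidableEq W := fun a b => Classical.propDecidable _
      exact (rotate_cons hab t _).symm

lemma eqvGen_Sh_iter (x : TS H) (k : ℕ) :
    Relation.EqvGen (EulerTourRel H) x (Sh^[k] x) := by
  induction k with
  | zero => exact Relation.EqvGen.refl x
  | succ k ih =>
    rw [Function.iterate_succ_apply']
    rcases rel_Sh (Sh^[k] x) with h | h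
    · exact Relation.EqvGen.trans _ _ _ ih (Relation.EqvGen.rel _ _ h)
    · rw [h]; exact ih

lemma quot_Sh_iter (x : TS H) (k : ℕ) :
    Quot.mk (EulerTourRel H) x = Quot.mk (EulerTourRel H) (Sh^[k] x) :=
  Quot.eqvGen_sound (eqvGen_Sh_iter x k)

lemma euler_rotate [DecidableEq W] {a : W} (c : H.Walk a a)
    (hc : c.IsEulerian) (h : u ∈ c.support) : (c.rotate u h).IsEulerian := by
  intro e he
  exact ((c.rotate_edges (u := u) h).perm.count_eq e).trans (hc e he)

open Classical in
noncomputable def rotTS (x : TS H) {u : W} (h : u ∈ x.2.1.support) : TS H :=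
  ⟨u, x.2.1.rotate u h, euler_rotate _ x.2.2 h⟩

open Classical in
lemma rel_rotTS (x : TS H) {u : W} (h : u ∈ x.2.1.support) :
    EulerTourRel H x (rotTS x h) := ⟨h, rfl⟩

open Classical in
/-- every rotation of a closed tour is an iterate of the one-step shift -/
lemma exists_iter_eq_rotTS (x : TS H) {u : W} (h : u ∈ x.2.1.support) :
    ∃ n, Sh^[n] x = rotTS x h := by
  obtain ⟨k, hk⟩ : ∃ k, (x.2.1.takeUntil u h).length = k := ⟨_, rfl⟩
  induction k using Nat.strong_induction_on generalizing x with
  | _ k ih =>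
    obtain ⟨a, p, hp⟩ := x
    by_cases hau : a = u
    · subst hau
      refine ⟨0, ?_⟩
      apply TS_ext
      simp only [rotTS, erase, Function.iterate_zero_apply]
      exact Sigma.ext rfl (heq_of_eq (rotate_start p h).symm)
    · cases p with
      | nil => simp at h; exact absurd h.symm hau
      | @cons _ b _ hab t =>
        have ht : u ∈ t.support := by
          rcases (by simpa using h : u = a ∨ u ∈ t.support) with h0 | h0
          · exact absurd h0.symm hau
          · exact h0
        have ht' : u ∈ (t.concat hab).support := mem_support_concat_of_mem t hab ht
        have hlen : (t.takeUntil u ht).length < k := by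
          rw [← hk, takeUntil_cons_of_ne _ _ hau h]
          simp [Walk.length_cons]
        have hkey : ((Walk.cons hab t).rotate u h) = (t.concat hab).rotate u ht' :=
          rotate_cons_eq_rotate_concat hab t hau h ht
        have heul : (t.concat hab).IsEulerian :=
          shs_eulerian ⟨a, Walk.cons hab t⟩ hp
        have hsh : Sh ⟨a, ⟨Walk.cons hab t, hp⟩⟩ = ⟨b, ⟨t.concat hab, heul⟩⟩ := by
          apply TS_ext; rfl
        have hlen2 : ((t.concat hab).takeUntil u ht').length = (t.takeUntil u ht).length := by
          rw [takeUntil_concat_of_mem t hab ht]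
        obtain ⟨n, hn⟩ := ih _ hlen ⟨b, ⟨t.concat hab, heul⟩⟩ ht' hlen2
        refine ⟨n + 1, ?_⟩
        rw [Function.iterate_succ_apply, hsh, hn]
        apply TS_ext
        simp only [rotTS, erase]
        exact Sigma.ext rfl (heq_of_eq hkey.symm)

lemma rel_imp_iter {x y : TS H} (hxy : EulerTourRel H x y) : ∃ n, Sh^[n] x = y := by
  obtain ⟨h, hy⟩ := hxy
  obtain ⟨n, hn⟩ := exists_iter_eq_rotTS x h
  refine ⟨n, hn.trans ?_⟩
  apply TS_ext
  obtain ⟨b, q, hq⟩ := y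
  simp only [rotTS, erase] at hy ⊢
  exact Sigma.ext rfl (heq_of_eq hy.symm)


variable {V : Type} [LinearOrder V] {G : SimpleGraph V}

@[simp] lemma emin_mk (a b : V) : Sym2.emin s(a,b) = min a b := rfl
@[simp] lemma emax_mk (a b : V) : Sym2.emax s(a,b) = max a b := rfl

lemma mk_emin_emax (e : Sym2 V) : s(e.emin, e.emax) = e := by
  induction e with
  | _ a b =>
    rcases le_total a b with h | h
    · simp [min_eq_left h, max_eq_right h]
    · simp [min_eq_right h, max_eq_left h, Sym2.eq_swap]

lemma adj_emin_emax (e : G.edgeSet) : G.Adj (e : Sym2 V).emin (e : Sym2 V).emax := by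
  have := e.2
  rw [← mk_emin_emax (e : Sym2 V)] at this
  exact this

lemma emin_le_emax (e : Sym2 V) : e.emin ≤ e.emax := by
  induction e with
  | _ a b => simpa using min_le_max

lemma emin_lt_emax (e : G.edgeSet) : (e : Sym2 V).emin < (e : Sym2 V).emax :=
  lt_of_le_of_ne (emin_le_emax _) (adj_emin_emax e).ne

@[simp] lemma adj_inl_inr {u : V} {e : G.edgeSet} {b : Bool} :
    (subdiv2 G).Adj (.inl u) (.inr (e,b)) ↔
      ((b = false ∧ u = Sym2.emin (e : Sym2 V)) ∨ (b = true ∧ u = Sym2.emax (e : Sym2 V))) := by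
  show (Sum.inl u ≠ Sum.inr (e,b)) ∧ _ ↔ _
  simp only [subdivRel]
  tauto

@[simp] lemma adj_inr_inr {e e' : G.edgeSet} {b b' : Bool} :
    (subdiv2 G).Adj (.inr (e,b)) (.inr (e',b')) ↔
      (e = e' ∧ ((b = false ∧ b' = true) ∨ (b = true ∧ b' = false))) := by
  show (_ ≠ _) ∧ _ ↔ _
  simp only [subdivRel, ne_eq, Sum.inr.injEq, Prod.mk.injEq]
  constructor
  · rintro ⟨hne, (⟨he, rfl, rfl⟩ | ⟨he, rfl, rfl⟩)⟩
    · exact ⟨Subtype.ext he, Or.inl ⟨rfl, rfl⟩⟩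
    · exact ⟨(Subtype.ext he).symm, Or.inr ⟨rfl, rfl⟩⟩
  · rintro ⟨rfl, (⟨rfl, rfl⟩ | ⟨rfl, rfl⟩)⟩
    · exact ⟨by simp, Or.inl ⟨rfl, rfl, rfl⟩⟩
    · exact ⟨by simp, Or.inr ⟨rfl, rfl, rfl⟩⟩

@[simp] lemma not_adj_inl_inl {u v : V} : ¬ (subdiv2 G).Adj (.inl u) (.inl v) := by
  rintro ⟨hne, (h | h)⟩ <;> exact h

lemma adj_inr_iff (e : G.edgeSet) (b : Bool) (z : V ⊕ (G.edgeSet × Bool)) :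
    (subdiv2 G).Adj (.inr (e,b)) z ↔
      (z = .inr (e, !b) ∨
        (b = false ∧ z = .inl (Sym2.emin (e : Sym2 V))) ∨
        (b = true ∧ z = .inl (Sym2.emax (e : Sym2 V)))) := by
  cases z with
  | inl w =>
    rw [(subdiv2 G).adj_comm, adj_inl_inr]
    cases b <;> simp
  | inr p =>
    obtain ⟨e', b'⟩ := p
    rw [adj_inr_inr]
    cases b <;> cases b' <;> simp [eq_comm]

lemma adj_inl_iff (u : V) (z : V ⊕ (G.edgeSet × Bool)) :
    (subdiv2 G).Adj (.inl u) z ↔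
      (∃ e : G.edgeSet, (z = .inr (e, false) ∧ u = Sym2.emin (e : Sym2 V)) ∨
        (z = .inr (e, true) ∧ u = Sym2.emax (e : Sym2 V))) := by
  cases z with
  | inl w => simp
  | inr p =>
    obtain ⟨e', b'⟩ := p
    rw [adj_inl_inr]
    constructor
    · rintro (⟨rfl, rfl⟩ | ⟨rfl, rfl⟩)
      · exact ⟨e', Or.inl ⟨rfl, rfl⟩⟩
      · exact ⟨e', Or.inr ⟨rfl, rfl⟩⟩
    · rintro ⟨e, (⟨he, rfl⟩ | ⟨he, rfl⟩)⟩ <;>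
        obtain ⟨rfl, rfl⟩ := (by simpa using he : e' = e ∧ _)
      · exact Or.inl ⟨rfl, rfl⟩
      · exact Or.inr ⟨rfl, rfl⟩

/-- the three kinds of edges of `subdiv2 G`, one triple per edge of `G` -/
def E1 (e : G.edgeSet) : Sym2 (V ⊕ (G.edgeSet × Bool)) :=
  s(.inl (Sym2.emin (e : Sym2 V)), .inr (e, false))
def E2 (e : G.edgeSet) : Sym2 (V ⊕ (G.edgeSet × Bool)) :=
  s(.inr (e, false), .inr (e, true))
def E3 (e : G.edgeSet) : Sym2 (V ⊕ (G.edgeSet × Bool)) :=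
  s(.inr (e, true), .inl (Sym2.emax (e : Sym2 V)))

@[simp] lemma E1_inj {e e' : G.edgeSet} : E1 e = E1 (G := G) e' ↔ e = e' := by
  constructor
  · intro h
    rcases Sym2.eq_iff.mp h with ⟨_, h2⟩ | ⟨h1, _⟩
    · simpa using h2
    · simp at h1
  · rintro rfl; rfl

@[simp] lemma E2_inj {e e' : G.edgeSet} : E2 e = E2 (G := G) e' ↔ e = e' := by
  constructor
  · intro h
    rcases Sym2.eq_iff.mp h with ⟨h2, _⟩ | ⟨h1, _⟩
    · simpa using h2
    · simp at h1
  · rintro rfl; rfl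

@[simp] lemma E3_inj {e e' : G.edgeSet} : E3 e = E3 (G := G) e' ↔ e = e' := by
  constructor
  · intro h
    rcases Sym2.eq_iff.mp h with ⟨h2, _⟩ | ⟨h1, _⟩
    · simpa using h2
    · simp at h1
  · rintro rfl; rfl

@[simp] lemma E1_ne_E2 {e e' : G.edgeSet} : E1 e ≠ E2 (G := G) e' := by
  intro h; rcases Sym2.eq_iff.mp h with ⟨h1, _⟩ | ⟨h1, _⟩ <;> simp at h1

@[simp] lemma E1_ne_E3 {e e' : G.edgeSet} : E1 e ≠ E3 (G := G) e' := by
  intro h; rcases Sym2.eq_iff.mp h with ⟨h1, _⟩ | ⟨_, h2⟩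
  · simp at h1
  · simp at h2

@[simp] lemma E2_ne_E3 {e e' : G.edgeSet} : E2 e ≠ E3 (G := G) e' := by
  intro h; rcases Sym2.eq_iff.mp h with ⟨h1, _⟩ | ⟨h2, _⟩
  · simp at h1
  · simp at h2

lemma adj_E1 (e : G.edgeSet) :
    (subdiv2 G).Adj (.inl (Sym2.emin (e : Sym2 V))) (.inr (e, false)) := by simp
lemma adj_E2 (e : G.edgeSet) :
    (subdiv2 G).Adj (.inr (e, false)) (.inr (e, true)) := by simp
lemma adj_E3 (e : G.edgeSet) :
    (subdiv2 G).Adj (.inr (e, true)) (.inl (Sym2.emax (e : Sym2 V))) := by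
  rw [(subdiv2 G).adj_comm]; simp

lemma mem_edgeSet_subdiv2 {f : Sym2 (V ⊕ (G.edgeSet × Bool))} :
    f ∈ (subdiv2 G).edgeSet ↔ ∃ e : G.edgeSet, f = E1 e ∨ f = E2 e ∨ f = E3 e := by
  constructor
  · induction f with
    | _ x y =>
      intro hxy
      rw [mem_edgeSet] at hxy
      cases x with
      | inl u =>
        rw [adj_inl_iff] at hxy
        obtain ⟨e, (⟨rfl, rfl⟩ | ⟨rfl, rfl⟩)⟩ := hxy
        · exact ⟨e, Or.inl rfl⟩
        · exact ⟨e, Or.inr (Or.inr (Sym2.eq_swap))⟩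
      | inr p =>
        obtain ⟨e, b⟩ := p
        rw [adj_inr_iff] at hxy
        rcases hxy with rfl | ⟨rfl, rfl⟩ | ⟨rfl, rfl⟩
        · cases b
          · exact ⟨e, Or.inr (Or.inl rfl)⟩
          · exact ⟨e, Or.inr (Or.inl Sym2.eq_swap)⟩
        · exact ⟨e, Or.inl Sym2.eq_swap⟩
        · exact ⟨e, Or.inr (Or.inr rfl)⟩
  · rintro ⟨e, (rfl | rfl | rfl)⟩
    · exact adj_E1 e
    · exact adj_E2 e
    · exact adj_E3 e

/-- the subdivided replacement of a single edge, as a walk of length 3 -/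
def seg {a b : V} (h : G.Adj a b) : (subdiv2 G).Walk (.inl a) (.inl b) :=
  if hab : a < b then
    Walk.cons (by simp [min_eq_left hab.le] :
        (subdiv2 G).Adj (.inl a) (.inr (⟨s(a,b), h⟩, false)))
      (Walk.cons (adj_E2 ⟨s(a,b), h⟩)
        (Walk.cons (by simpa [max_eq_right hab.le] using adj_E3 (G := G) ⟨s(a,b), h⟩)
          Walk.nil))
  else
    Walk.cons (by simp [max_eq_left ((h.ne.lt_or_gt.resolve_left hab).le) ] :
        (subdiv2 G).Adj (.inl a) (.inr (⟨s(a,b), h⟩, true)))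
      (Walk.cons ((adj_E2 ⟨s(a,b), h⟩).symm)
        (Walk.cons (by
            have hba : b < a := h.ne.lt_or_gt.resolve_left hab
            have := (adj_E1 (G := G) ⟨s(a,b), h⟩).symm
            simpa [min_eq_right hba.le] using this)
          Walk.nil))

/-- the subdivision of a walk -/
def Fw : ∀ {a b : V}, G.Walk a b → (subdiv2 G).Walk (.inl a) (.inl b)
  | _, _, .nil => .nil
  | _, _, .cons h p => (seg h).append (Fw p)

@[simp] lemma Fw_nil {a : V} : Fw (G := G) (.nil : G.Walk a a) = .nil := rfl
@[simp] lemma Fw_cons {a b c : V} (h : G.Adj a b) (p : G.Walk b c) :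
    Fw (.cons h p) = (seg h).append (Fw p) := rfl

lemma Fw_append {a b c : V} (p : G.Walk a b) (q : G.Walk b c) :
    Fw (p.append q) = (Fw p).append (Fw q) := by
  induction p with
  | nil => rfl
  | cons h t ih => simp [Walk.cons_append, ih, Walk.append_assoc]

lemma Fw_concat {a b c : V} (p : G.Walk a b) (h : G.Adj b c) :
    Fw (p.concat h) = (Fw p).append (seg h) := by
  rw [Walk.concat_eq_append, Fw_append]
  simp [Walk.append_nil]

lemma seg_edges {a b : V} (h : G.Adj a b) :
    (seg h).edges = [E1 ⟨s(a,b), h⟩, E2 ⟨s(a,b), h⟩, E3 ⟨s(a,b), h⟩] ∨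
    (seg h).edges = [E3 ⟨s(a,b), h⟩, E2 ⟨s(a,b), h⟩, E1 ⟨s(a,b), h⟩] := by
  by_cases hab : a < b
  · left
    simp only [seg, dif_pos hab, Walk.edges_cons, Walk.edges_nil]
    have h1 : a = Sym2.emin (s(a,b) : Sym2 V) := by simp [min_eq_left hab.le]
    have h3 : b = Sym2.emax (s(a,b) : Sym2 V) := by simp [max_eq_right hab.le]
    rw [E1, E2, E3, ← h1, ← h3]
  · right
    have hba : b < a := h.ne.lt_or_gt.resolve_left hab
    simp only [seg, dif_neg hab, Walk.edges_cons, Walk.edges_nil]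
    have h1 : b = Sym2.emin (s(a,b) : Sym2 V) := by simp [min_eq_right hba.le]
    have h3 : a = Sym2.emax (s(a,b) : Sym2 V) := by simp [max_eq_left hba.le]
    rw [E1, E2, E3, ← h1, ← h3]
    simp only [List.cons.injEq]
    exact ⟨Sym2.eq_swap, Sym2.eq_swap, Sym2.eq_swap, trivial⟩

@[simp] lemma E2_ne_E1 {e e' : G.edgeSet} : E2 e ≠ E1 (G := G) e' := (E1_ne_E2).symm
@[simp] lemma E3_ne_E1 {e e' : G.edgeSet} : E3 e ≠ E1 (G := G) e' := (E1_ne_E3).symm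
@[simp] lemma E3_ne_E2 {e e' : G.edgeSet} : E3 e ≠ E2 (G := G) e' := (E2_ne_E3).symm

section Counts

variable {instS : DecidableEq (Sym2 V)} {instS2 : DecidableEq (Sym2 (V ⊕ (G.edgeSet × Bool)))}

lemma count_Fw_E1 {a b : V} (p : G.Walk a b) (e : G.edgeSet) :
    ((Fw p).edges).count (E1 e) = (p.edges).count (e : Sym2 V) := by
  induction p with
  | nil => rfl
  | @cons a c b h t ih =>
    rw [Fw_cons, Walk.edges_append, List.count_append, Walk.edges_cons, List.count_cons, ih]
    have hco : (s(a,c) = (e : Sym2 V)) ↔ ((⟨s(a,c), h⟩ : G.edgeSet) = e) := by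
      rw [Subtype.ext_iff]
    rcases seg_edges h with hs | hs <;>
      rw [hs] <;>
      simp only [List.count_cons, List.count_nil, beq_iff_eq, E1_inj, E2_ne_E1, E3_ne_E1,
        if_false, hco] <;>
      omega

lemma count_Fw_E2 {a b : V} (p : G.Walk a b) (e : G.edgeSet) :
    ((Fw p).edges).count (E2 e) = (p.edges).count (e : Sym2 V) := by
  induction p with
  | nil => rfl
  | @cons a c b h t ih =>
    rw [Fw_cons, Walk.edges_append, List.count_append, Walk.edges_cons, List.count_cons, ih]
    have hco : (s(a,c) = (e : Sym2 V)) ↔ ((⟨s(a,c), h⟩ : G.edgeSet) = e) := by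
      rw [Subtype.ext_iff]
    rcases seg_edges h with hs | hs <;>
      rw [hs] <;>
      simp only [List.count_cons, List.count_nil, beq_iff_eq, E2_inj, E1_ne_E2, E3_ne_E2,
        if_false, hco] <;>
      omega

lemma count_Fw_E3 {a b : V} (p : G.Walk a b) (e : G.edgeSet) :
    ((Fw p).edges).count (E3 e) = (p.edges).count (e : Sym2 V) := by
  induction p with
  | nil => rfl
  | @cons a c b h t ih =>
    rw [Fw_cons, Walk.edges_append, List.count_append, Walk.edges_cons, List.count_cons, ih]
    have hco : (s(a,c) = (e : Sym2 V)) ↔ ((⟨s(a,c), h⟩ : G.edgeSet) = e) := by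
      rw [Subtype.ext_iff]
    rcases seg_edges h with hs | hs <;>
      rw [hs] <;>
      simp only [List.count_cons, List.count_nil, beq_iff_eq, E3_inj, E1_ne_E3, E2_ne_E3,
        if_false, hco] <;>
      omega

end Counts

lemma isEulerian_Fw {instV : DecidableEq V} {instV2 : DecidableEq (V ⊕ (G.edgeSet × Bool))}
    {a b : V} {p : G.Walk a b} (hp : p.IsEulerian) : (Fw p).IsEulerian := by
  intro f hf
  rw [mem_edgeSet_subdiv2] at hf
  obtain ⟨e, rfl | rfl | rfl⟩ := hf
  · rw [count_Fw_E1]; exact hp _ e.2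
  · rw [count_Fw_E2]; exact hp _ e.2
  · rw [count_Fw_E3]; exact hp _ e.2

lemma isEulerian_of_Fw {instV : DecidableEq V} {instV2 : DecidableEq (V ⊕ (G.edgeSet × Bool))}
    {a b : V} {p : G.Walk a b} (hp : (Fw p).IsEulerian) : p.IsEulerian := by
  intro e he
  have h2 := hp (E2 ⟨e, he⟩) (mem_edgeSet_subdiv2.mpr ⟨⟨e, he⟩, Or.inr (Or.inl rfl)⟩)
  rw [count_Fw_E2] at h2
  exact h2

lemma adj_inl_iff' (u : V) (z : V ⊕ (G.edgeSet × Bool)) :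
    (subdiv2 G).Adj (.inl u) z ↔
      ∃ (u' : V) (hA : G.Adj u u'),
        (u < u' ∧ z = .inr (⟨s(u,u'), hA⟩, false)) ∨
        (u' < u ∧ z = .inr (⟨s(u,u'), hA⟩, true)) := by
  rw [adj_inl_iff]
  constructor
  · rintro ⟨e, (⟨rfl, rfl⟩ | ⟨rfl, rfl⟩)⟩
    · refine ⟨Sym2.emax (e : Sym2 V), adj_emin_emax e, Or.inl ⟨emin_lt_emax e, ?_⟩⟩
      have he : e = ⟨s(Sym2.emin (e : Sym2 V), Sym2.emax (e : Sym2 V)), adj_emin_emax e⟩ :=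
        Subtype.ext (mk_emin_emax _).symm
      exact congrArg (fun t => Sum.inr (t, false)) he
    · refine ⟨Sym2.emin (e : Sym2 V), (adj_emin_emax e).symm, Or.inr ⟨emin_lt_emax e, ?_⟩⟩
      have he : e = ⟨s(Sym2.emax (e : Sym2 V), Sym2.emin (e : Sym2 V)), (adj_emin_emax e).symm⟩ :=
        Subtype.ext ((Sym2.eq_swap.trans (mk_emin_emax _)).symm)
      exact congrArg (fun t => Sum.inr (t, true)) he
  · rintro ⟨u', hA, (⟨hlt, rfl⟩ | ⟨hlt, rfl⟩)⟩
    · exact ⟨⟨s(u,u'), hA⟩, Or.inl ⟨rfl, by simp [min_eq_left hlt.le]⟩⟩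
    · exact ⟨⟨s(u,u'), hA⟩, Or.inr ⟨rfl, by simp [max_eq_left hlt.le]⟩⟩

lemma emin_lt' {u u' : V} (h : u < u') : Sym2.emin (s(u,u') : Sym2 V) = u := by
  simp [min_eq_left h.le]
lemma emax_lt' {u u' : V} (h : u < u') : Sym2.emax (s(u,u') : Sym2 V) = u' := by
  simp [max_eq_right h.le]
lemma emin_gt' {u u' : V} (h : u' < u) : Sym2.emin (s(u,u') : Sym2 V) = u' := by
  simp [min_eq_right h.le]
lemma emax_gt' {u u' : V} (h : u' < u) : Sym2.emax (s(u,u') : Sym2 V) = u := by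
  simp [max_eq_left h.le]

lemma adj_inr_false (e : G.edgeSet) (z : V ⊕ (G.edgeSet × Bool)) :
    (subdiv2 G).Adj (.inr (e, false)) z ↔
      z = .inr (e, true) ∨ z = .inl (Sym2.emin (e : Sym2 V)) := by
  rw [adj_inr_iff]; simp

lemma adj_inr_true (e : G.edgeSet) (z : V ⊕ (G.edgeSet × Bool)) :
    (subdiv2 G).Adj (.inr (e, true)) z ↔
      z = .inr (e, false) ∨ z = .inl (Sym2.emax (e : Sym2 V)) := by
  rw [adj_inr_iff]; simp

theorem decomp : ∀ (n : ℕ) {u w : V} (q : (subdiv2 G).Walk (.inl u) (.inl w)),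
    q.length = n → q.IsTrail → ∃ p : G.Walk u w, Fw p = q := by
  intro n
  induction n using Nat.strong_induction_on with
  | _ n IH =>
    intro u w q hlen ht
    cases q with
    | nil => exact ⟨.nil, rfl⟩
    | @cons _ z _ h₁ q₁ =>
      obtain ⟨u', hA, hcase⟩ := (adj_inl_iff' u z).mp h₁
      rcases hcase with ⟨hlt, rfl⟩ | ⟨hlt, rfl⟩
      · -- ascending case: u < u', z = (e, false)
        cases q₁ with
        | @cons _ y _ h₂ q₂ =>
          rcases (adj_inr_false _ y).mp h₂ with rfl | hyeq
          · -- y = (e, true), the good case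
            cases q₂ with
            | @cons _ y' _ h₃ q₃ =>
              rcases (adj_inr_true _ y').mp h₃ with rfl | hyeq'
              · -- y' = (e, false) : duplicate middle edge
                exfalso
                have hd := ht.edges_nodup
                simp only [Walk.edges_cons, List.nodup_cons] at hd
                exact hd.2.1 (List.mem_cons.mpr (Or.inl Sym2.eq_swap))
              · -- y' = inl (emax e) = inl u'
                rw [emax_lt' hlt] at hyeq'
                subst hyeq'
                have hlen3 : q₃.length < n := by
                  simp only [Walk.length_cons] at hlen; omega
                obtain ⟨p₃, hp₃⟩ := IH q₃.length hlen3 q₃ rfl (ht.of_cons.of_cons.of_cons)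
                refine ⟨.cons hA p₃, ?_⟩
                rw [Fw_cons, hp₃, seg, dif_pos hlt]
                rfl
          · -- y = inl (emin e) = inl u : duplicate first edge
            exfalso
            rw [emin_lt' hlt] at hyeq
            subst hyeq
            have hd := ht.edges_nodup
            simp only [Walk.edges_cons, List.nodup_cons] at hd
            exact hd.1 (List.mem_cons.mpr (Or.inl Sym2.eq_swap))
      · -- descending case: u' < u, z = (e, true)
        cases q₁ with
        | @cons _ y _ h₂ q₂ =>
          rcases (adj_inr_true _ y).mp h₂ with rfl | hyeq
          · -- y = (e, false), the good case
            cases q₂ with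
            | @cons _ y' _ h₃ q₃ =>
              rcases (adj_inr_false _ y').mp h₃ with rfl | hyeq'
              · -- y' = (e, true) : duplicate middle edge
                exfalso
                have hd := ht.edges_nodup
                simp only [Walk.edges_cons, List.nodup_cons] at hd
                exact hd.2.1 (List.mem_cons.mpr (Or.inl Sym2.eq_swap))
              · -- y' = inl (emin e) = inl u'
                rw [emin_gt' hlt] at hyeq'
                subst hyeq'
                have hlen3 : q₃.length < n := by
                  simp only [Walk.length_cons] at hlen; omega
                obtain ⟨p₃, hp₃⟩ := IH q₃.length hlen3 q₃ rfl (ht.of_cons.of_cons.of_cons)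
                refine ⟨.cons hA p₃, ?_⟩
                rw [Fw_cons, hp₃, seg, dif_neg (asymm hlt)]
                rfl
          · -- y = inl (emax e) = inl u : duplicate first edge
            exfalso
            rw [emax_gt' hlt] at hyeq
            subst hyeq
            have hd := ht.edges_nodup
            simp only [Walk.edges_cons, List.nodup_cons] at hd
            exact hd.1 (List.mem_cons.mpr (Or.inl Sym2.eq_swap))

lemma seg_length {a b : V} (h : G.Adj a b) : (seg h).length = 3 := by
  rw [seg]; split <;> rfl

lemma Fw_length {a b : V} (p : G.Walk a b) : (Fw p).length = 3 * p.length := by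
  induction p with
  | nil => rfl
  | cons h t ih =>
    rw [Fw_cons, Walk.length_append, seg_length, ih, Walk.length_cons]
    ring

lemma Fw_inj {a b : V} (p : G.Walk a b) : ∀ (p' : G.Walk a b), Fw p = Fw p' → p = p' := by
  induction p with
  | nil =>
    intro p' hpp'
    cases p' with
    | nil => rfl
    | cons h' t' =>
      exfalso
      have := congrArg Walk.length hpp'
      rw [Fw_length, Fw_length] at this
      simp [Walk.length_cons] at this
  | @cons a c b h t ih =>
    intro p' hpp'
    cases p' with
    | nil =>
      exfalso
      have := congrArg Walk.length hpp'
      rw [Fw_length, Fw_length] at this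
      simp [Walk.length_cons] at this
    | @cons _ c' _ h' t' =>
      rw [Fw_cons, Fw_cons, seg, seg] at hpp'
      by_cases h1 : a < c <;> by_cases h2 : a < c'
      · rw [dif_pos h1, dif_pos h2] at hpp'
        simp only [Walk.cons_append, Walk.nil_append, Walk.cons.injEq] at hpp'
        obtain ⟨hv, hrest⟩ := hpp'
        obtain rfl : c = c' := Sym2.congr_right.mp (congrArg Subtype.val (by simpa using hv : (⟨s(a,c), h⟩ : G.edgeSet) = ⟨s(a,c'), h'⟩))
        have hrest2 := eq_of_heq hrest
        simp only [Walk.cons.injEq, heq_eq_eq, true_and, eq_iff_true_of_subsingleton] at hrest2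
        rw [ih t' hrest2]
      · rw [dif_pos h1, dif_neg h2] at hpp'
        simp only [Walk.cons_append, Walk.nil_append, Walk.cons.injEq] at hpp'
        obtain ⟨hv, hh⟩ := hpp'
        simp at hv
      · rw [dif_neg h1, dif_pos h2] at hpp'
        simp only [Walk.cons_append, Walk.nil_append, Walk.cons.injEq] at hpp'
        obtain ⟨hv, hh⟩ := hpp'
        simp at hv
      · rw [dif_neg h1, dif_neg h2] at hpp'
        simp only [Walk.cons_append, Walk.nil_append, Walk.cons.injEq] at hpp'
        obtain ⟨hv, hrest⟩ := hpp'
        obtain rfl : c = c' := Sym2.congr_right.mp (congrArg Subtype.val (by simpa using hv : (⟨s(a,c), h⟩ : G.edgeSet) = ⟨s(a,c'), h'⟩))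
        have hrest2 := eq_of_heq hrest
        simp only [Walk.cons.injEq, heq_eq_eq, true_and, eq_iff_true_of_subsingleton] at hrest2
        rw [ih t' hrest2]

lemma append_triple {W : Type} {H : SimpleGraph W} {x y z w v : W} (p : H.Walk x y)
    (h1 : H.Adj y z) (h2 : H.Adj z w) (h3 : H.Adj w v) :
    p.append (.cons h1 (.cons h2 (.cons h3 .nil))) = ((p.concat h1).concat h2).concat h3 := by
  rw [← Walk.concat_append, ← Walk.concat_append, ← Walk.concat_eq_append]

/-- subdivision at the level of closed-walk sigma types -/
def fs (x : RS G) : RS (subdiv2 G) := ⟨.inl x.1, Fw x.2⟩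

lemma shs3 (x : RS G) : shs (shs (shs (fs x))) = fs (shs x) := by
  obtain ⟨a, p⟩ := x
  cases p with
  | nil => rfl
  | @cons _ c _ h t =>
    show shs (shs (shs ⟨Sum.inl a, (seg h).append (Fw t)⟩)) = ⟨Sum.inl c, Fw (t.concat h)⟩
    rw [Fw_concat, seg]
    by_cases hac : a < c
    · rw [dif_pos hac, append_triple]
      simp only [Walk.cons_append, Walk.nil_append, shs_cons, Walk.concat_cons]
    · rw [dif_neg hac, append_triple]
      simp only [Walk.cons_append, Walk.nil_append, shs_cons, Walk.concat_cons]

lemma shs_iter_nil {W : Type} {H : SimpleGraph W} (v : W) (m : ℕ) :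
    shs^[m] (⟨v, .nil⟩ : RS H) = ⟨v, .nil⟩ := by
  induction m with
  | zero => rfl
  | succ m ih => rw [Function.iterate_succ_apply, shs_nil, ih]

lemma fst_shs_fs_cons {a c : V} (h : G.Adj a c) (t : G.Walk c a) :
    (∃ d, (shs (fs ⟨a, .cons h t⟩)).1 = Sum.inr d) ∧
    (∃ d, (shs (shs (fs ⟨a, .cons h t⟩))).1 = Sum.inr d) := by
  have hfs : fs (⟨a, .cons h t⟩ : RS G) = ⟨Sum.inl a, (seg h).append (Fw t)⟩ := rfl
  rw [hfs, seg]
  by_cases hac : a < c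
  · rw [dif_pos hac]
    simp only [Walk.cons_append, Walk.nil_append, shs_cons, Walk.concat_cons]
    exact ⟨⟨_, rfl⟩, ⟨_, rfl⟩⟩
  · rw [dif_neg hac]
    simp only [Walk.cons_append, Walk.nil_append, shs_cons, Walk.concat_cons]
    exact ⟨⟨_, rfl⟩, ⟨_, rfl⟩⟩

/-- key lemma: if an iterated shift of a subdivided tour starts at an original
vertex, then it is itself a subdivided tour (of a shifted original). -/
lemma iter_fs_inl : ∀ (m : ℕ) (x : RS G) (u₂ : V)
    (w : (subdiv2 G).Walk (.inl u₂) (.inl u₂)),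
    shs^[m] (fs x) = ⟨.inl u₂, w⟩ → ∃ m', shs^[m] (fs x) = fs (shs^[m'] x) := by
  intro m
  induction m using Nat.strong_induction_on with
  | _ m IH =>
    intro x u₂ w hw
    obtain ⟨a, p⟩ := x
    cases p with
    | nil =>
      exact ⟨0, by rw [show fs (⟨a, .nil⟩ : RS G) = ⟨Sum.inl a, .nil⟩ from rfl, shs_iter_nil]; rfl⟩
    | @cons _ c _ h t =>
      match m, IH, hw with
      | 0, IH, hw => exact ⟨0, rfl⟩
      | 1, IH, hw =>
        exfalso
        obtain ⟨d, hd⟩ := (fst_shs_fs_cons h t).1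
        rw [Function.iterate_one] at hw
        rw [hw] at hd
        simp at hd
      | 2, IH, hw =>
        exfalso
        obtain ⟨d, hd⟩ := (fst_shs_fs_cons h t).2
        rw [show shs^[2] (fs ⟨a, .cons h t⟩) = shs (shs (fs ⟨a, .cons h t⟩)) from rfl] at hw
        rw [hw] at hd
        simp at hd
      | (k+3), IH, hw =>
        have h3 : shs^[k+3] (fs (⟨a, .cons h t⟩ : RS G))
            = shs^[k] (fs (shs ⟨a, .cons h t⟩)) := by
          rw [Function.iterate_add_apply shs k 3]
          rw [show shs^[3] (fs (⟨a, .cons h t⟩ : RS G)) = fs (shs ⟨a, .cons h t⟩) from shs3 _]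
        rw [h3] at hw
        obtain ⟨m', hm'⟩ := IH k (by omega) (shs ⟨a, .cons h t⟩) u₂ w hw
        refine ⟨m' + 1, ?_⟩
        rw [h3, hm']
        exact congrArg fs (Function.iterate_succ_apply shs m' _).symm


lemma exists_inl {instV2 : DecidableEq (V ⊕ (G.edgeSet × Bool))}
    {a : V ⊕ (G.edgeSet × Bool)} (q : (subdiv2 G).Walk a a) (hq : q.IsEulerian) :
    ∃ u : V, Sum.inl u ∈ q.support := by
  cases a with
  | inl u => exact ⟨u, Walk.start_mem_support q⟩
  | inr p =>
    obtain ⟨e, b⟩ := p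
    cases b
    · -- start at (e, false)
      cases q with
      | nil =>
        exfalso
        have := hq (E2 e) (mem_edgeSet_subdiv2.mpr ⟨e, Or.inr (Or.inl rfl)⟩)
        simp [Walk.edges_nil] at this
      | @cons _ y _ h₁ q₁ =>
        rcases (adj_inr_false e y).mp h₁ with rfl | rfl
        · -- second vertex (e, true)
          cases q₁ with
          | @cons _ y' _ h₂ q₂ =>
            rcases (adj_inr_true e y').mp h₂ with rfl | rfl
            · -- back to (e,false): duplicate edge contradiction
              exfalso
              have hd := hq.isTrail.edges_nodup
              simp only [Walk.edges_cons, List.nodup_cons] at hd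
              exact hd.1 (List.mem_cons.mpr (Or.inl Sym2.eq_swap))
            · exact ⟨_, by
                simp only [Walk.support_cons, List.mem_cons]
                exact Or.inr (Or.inr (Walk.start_mem_support _))⟩
        · exact ⟨_, by
            simp only [Walk.support_cons, List.mem_cons]
            exact Or.inr (Walk.start_mem_support _)⟩
    · -- start at (e, true)
      cases q with
      | nil =>
        exfalso
        have := hq (E2 e) (mem_edgeSet_subdiv2.mpr ⟨e, Or.inr (Or.inl rfl)⟩)
        simp [Walk.edges_nil] at this
      | @cons _ y _ h₁ q₁ =>
        rcases (adj_inr_true e y).mp h₁ with rfl | rfl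
        · cases q₁ with
          | @cons _ y' _ h₂ q₂ =>
            rcases (adj_inr_false e y').mp h₂ with rfl | rfl
            · exfalso
              have hd := hq.isTrail.edges_nodup
              simp only [Walk.edges_cons, List.nodup_cons] at hd
              exact hd.1 (List.mem_cons.mpr (Or.inl Sym2.eq_swap))
            · exact ⟨_, by
                simp only [Walk.support_cons, List.mem_cons]
                exact Or.inr (Or.inr (Walk.start_mem_support _))⟩
        · exact ⟨_, by
            simp only [Walk.support_cons, List.mem_cons]
            exact Or.inr (Walk.start_mem_support _)⟩


section Assembly

variable {V : Type} [LinearOrder V] {G : SimpleGraph V}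

open Classical in
noncomputable def FT (x : TS G) : TS (subdiv2 G) :=
  ⟨Sum.inl x.1, Fw x.2.1, isEulerian_Fw x.2.2⟩

@[simp] lemma erase_FT (x : TS G) : erase (FT x) = fs (erase x) := rfl

lemma FT_Sh (x : TS G) : FT (Sh x) = Sh^[3] (FT x) := by
  apply TS_ext
  rw [erase_FT, erase_Sh_iter, erase_FT, erase_Sh]
  exact (shs3 (erase x)).symm

lemma FT_Sh_iter (x : TS G) (n : ℕ) : FT (Sh^[n] x) = Sh^[3*n] (FT x) := by
  induction n generalizing x with
  | zero => rfl
  | succ n ih =>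
    rw [Function.iterate_succ_apply, ih (Sh x), FT_Sh,
      show 3 * (n+1) = 3 * n + 3 by ring, Function.iterate_add_apply]

lemma wd_f (x y : TS G) (hxy : EulerTourRel G x y) :
    Quot.mk (EulerTourRel (subdiv2 G)) (FT x) = Quot.mk (EulerTourRel (subdiv2 G)) (FT y) := by
  obtain ⟨n, hn⟩ := rel_imp_iter hxy
  rw [← hn, FT_Sh_iter]
  exact quot_Sh_iter (FT x) (3*n)

noncomputable def fmap : EulerTours G → EulerTours (subdiv2 G) :=
  Quot.lift (fun x => Quot.mk _ (FT x)) wd_f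

open Classical in
noncomputable def gdat {u : V} (r : (subdiv2 G).Walk (.inl u) (.inl u))
    (hr : EuP r) : {p : G.Walk u u // Fw p = r} :=
  ⟨(decomp r.length r rfl (euP_isTrail hr)).choose,
    (decomp r.length r rfl (euP_isTrail hr)).choose_spec⟩

open Classical in
noncomputable def gX {u : V} (r : (subdiv2 G).Walk (.inl u) (.inl u))
    (hr : EuP r) : TS G :=
  ⟨u, (gdat r hr).1, isEulerian_of_Fw (by rw [(gdat r hr).2]; exact hr)⟩

open Classical in
noncomputable def gout {u : V} (r : (subdiv2 G).Walk (.inl u) (.inl u))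
    (hr : EuP r) : EulerTours G :=
  Quot.mk _ (gX r hr)

lemma FT_gX {u : V} (r : (subdiv2 G).Walk (.inl u) (.inl u)) (hr : EuP r) :
    FT (gX r hr) = ⟨Sum.inl u, r, hr⟩ := by
  apply TS_ext
  show (⟨Sum.inl u, Fw (gdat r hr).1⟩ : RS (subdiv2 G)) = ⟨Sum.inl u, r⟩
  rw [(gdat r hr).2]

open Classical in
lemma key : ∀ (m : ℕ) (x : TS G) (u₂ : V) (r₂ : (subdiv2 G).Walk (.inl u₂) (.inl u₂))
    (hr₂ : EuP r₂),
    Sh^[m] (FT x) = (⟨Sum.inl u₂, r₂, hr₂⟩ : TS (subdiv2 G)) →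
    gout r₂ hr₂ = Quot.mk (EulerTourRel G) x := by
  intro m x u₂ r₂ hr₂ hiter
  have herase : shs^[m] (fs (erase x)) = ⟨Sum.inl u₂, r₂⟩ := by
    rw [← erase_FT, ← erase_Sh_iter, hiter]
    rfl
  obtain ⟨m', hm'⟩ := iter_fs_inl m (erase x) u₂ r₂ herase
  have h2 : fs (erase (Sh^[m'] x)) = (⟨Sum.inl u₂, r₂⟩ : RS (subdiv2 G)) := by
    rw [erase_Sh_iter]
    exact hm'.symm.trans herase
  rcases hYdef : Sh^[m'] x with ⟨v₀, p₀, hp₀⟩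
  rw [hYdef] at h2
  have h3 : (⟨Sum.inl v₀, Fw p₀⟩ : RS (subdiv2 G)) = ⟨Sum.inl u₂, r₂⟩ := h2
  obtain ⟨hfst, hsnd⟩ := Sigma.mk.inj_iff.mp h3
  obtain rfl : u₂ = v₀ := (Sum.inl.inj hfst).symm
  have hFw : Fw p₀ = r₂ := eq_of_heq hsnd
  have hch : (gdat r₂ hr₂).1 = p₀ := Fw_inj _ _ ((gdat r₂ hr₂).2.trans hFw.symm)
  have hgx : gX r₂ hr₂ = Sh^[m'] x := by
    rw [hYdef]
    apply TS_ext
    show (⟨u₂, (gdat r₂ hr₂).1⟩ : RS G) = ⟨u₂, p₀⟩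
    rw [hch]
  rw [gout, hgx]
  exact (quot_Sh_iter x m').symm

open Classical in
noncomputable def gbar (y : TS (subdiv2 G)) : EulerTours G :=
  gout ((rotTS y (exists_inl y.2.1 y.2.2).choose_spec).2.1)
    ((rotTS y (exists_inl y.2.1 y.2.2).choose_spec).2.2)

open Classical in
lemma gbar_key (y : TS (subdiv2 G)) {m : ℕ} {x : TS G}
    (h : Sh^[m] (FT x) = rotTS y (exists_inl y.2.1 y.2.2).choose_spec) :
    gbar y = Quot.mk (EulerTourRel G) x :=
  key m x _ _ _ h

open Classical in
lemma wd_g (y z : TS (subdiv2 G)) (hyz : EulerTourRel (subdiv2 G) y z) :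
    gbar y = gbar z := by
  obtain ⟨n, hn⟩ := rel_imp_iter hyz
  obtain ⟨n₁, hn₁⟩ := exists_iter_eq_rotTS y (exists_inl y.2.1 y.2.2).choose_spec
  obtain ⟨n₂, hn₂⟩ := exists_iter_eq_rotTS z (exists_inl z.2.1 z.2.2).choose_spec
  have hn₂' : Sh^[n₂ + n] y = rotTS z (exists_inl z.2.1 z.2.2).choose_spec := by
    rw [Function.iterate_add_apply, hn, hn₂]
  have hetay : (⟨Sum.inl (exists_inl y.2.1 y.2.2).choose,
      ⟨(rotTS y (exists_inl y.2.1 y.2.2).choose_spec).2.1,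
       (rotTS y (exists_inl y.2.1 y.2.2).choose_spec).2.2⟩⟩ : TS (subdiv2 G))
      = rotTS y (exists_inl y.2.1 y.2.2).choose_spec := TS_ext rfl
  have hetaz : (⟨Sum.inl (exists_inl z.2.1 z.2.2).choose,
      ⟨(rotTS z (exists_inl z.2.1 z.2.2).choose_spec).2.1,
       (rotTS z (exists_inl z.2.1 z.2.2).choose_spec).2.2⟩⟩ : TS (subdiv2 G))
      = rotTS z (exists_inl z.2.1 z.2.2).choose_spec := TS_ext rfl
  rcases le_total n₁ (n₂ + n) with hle | hle
  · have hrot : Sh^[(n₂ + n) - n₁] (FT (gX _ (rotTS y (exists_inl y.2.1 y.2.2).choose_spec).2.2))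
        = rotTS z (exists_inl z.2.1 z.2.2).choose_spec := by
      erw [FT_gX]; rw [hetay, ← hn₁, ← Function.iterate_add_apply,
        show n₂ + n - n₁ + n₁ = n₂ + n by omega, hn₂']
    have h1 : gbar z = Quot.mk _ (gX _ (rotTS y (exists_inl y.2.1 y.2.2).choose_spec).2.2) :=
      gbar_key z hrot
    rw [h1]
    rfl
  · have hrot : Sh^[n₁ - (n₂ + n)] (FT (gX _ (rotTS z (exists_inl z.2.1 z.2.2).choose_spec).2.2))
        = rotTS y (exists_inl y.2.1 y.2.2).choose_spec := by
      erw [FT_gX]; rw [hetaz, ← hn₂', ← Function.iterate_add_apply,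
        show n₁ - (n₂ + n) + (n₂ + n) = n₁ by omega, hn₁]
    have h1 : gbar y = Quot.mk _ (gX _ (rotTS z (exists_inl z.2.1 z.2.2).choose_spec).2.2) :=
      gbar_key y hrot
    rw [h1]
    rfl

noncomputable def gmap : EulerTours (subdiv2 G) → EulerTours G :=
  Quot.lift gbar wd_g

open Classical in
lemma left_inv_aux (x : TS G) : gmap (fmap (Quot.mk _ x)) = Quot.mk _ x := by
  show gbar (FT x) = Quot.mk _ x
  obtain ⟨n₁, hn₁⟩ := exists_iter_eq_rotTS (FT x)
    (exists_inl (FT x).2.1 (FT x).2.2).choose_spec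
  exact gbar_key (FT x) hn₁

open Classical in
lemma right_inv_aux (y : TS (subdiv2 G)) : fmap (gmap (Quot.mk _ y)) = Quot.mk _ y := by
  show Quot.mk _ (FT (gX _ (rotTS y (exists_inl y.2.1 y.2.2).choose_spec).2.2)) = Quot.mk _ y
  erw [FT_gX]
  have hrel : EulerTourRel (subdiv2 G) y (rotTS y (exists_inl y.2.1 y.2.2).choose_spec) :=
    rel_rotTS y _
  exact (Quot.sound hrel).symm

end Assembly

end ET

/-- the Euler tours of `G` are in bijection with the Euler tours of
the graph `G'` obtained from `G` by replacing every edge by a path of length three. -/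
theorem eulerTours_equiv_subdiv2 {V : Type} [LinearOrder V] (G : SimpleGraph V) :
    Nonempty (EulerTours G ≃ EulerTours (subdiv2 G)) := by
  refine ⟨⟨ET.fmap, ET.gmap, ?_, ?_⟩⟩
  · intro q
    induction q using Quot.ind with
    | _ x => exact ET.left_inv_aux x
  · intro q
    induction q using Quot.ind with
    | _ y => exact ET.right_inv_aux y
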